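/- For each r ≥ 1, let G_r be the graph on vertices v_0, ..., v_{3r} (indices mod 3r+1) where v_i is adjacent to v_{i−1}, v_{i+1}, and v_{i+3j+2} for all j ∈ {0,...,r−1}. Then for each vertex v of G_r, the graph G_r − v has, up to permutation of colors, exactly one proper 3-coloring. -/

import Mathlib

/-- Pokrovskiy's graph `G_r` on vertices `ZMod (3r+1)`: `x` and `y` are adjacent
iff they differ by `±1` or by `±(3j+2)` for some `0 ≤ j < r`. -/
def pok (r : ℕ) : SimpleGraph (ZMod (3 * r + 1)) where
  Adj x y := x ≠ y ∧ (y - x = 1 ∨ x - y = 1 ∨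
    (∃ j < r, y - x = ((3 * j + 2 : ℕ) : ZMod (3 * r + 1))) ∨
    (∃ j < r, x - y = ((3 * j + 2 : ℕ) : ZMod (3 * r + 1))))
  symm := by
    constructor
    rintro x y ⟨h1, h2⟩
    refine ⟨h1.symm, ?_⟩
    rcases h2 with h | h | h | h
    · exact Or.inr (Or.inl h)
    · exact Or.inl h
    · exact Or.inr (Or.inr (Or.inr h))
    · exact Or.inr (Or.inr (Or.inl h))
  loopless := ⟨fun x h => h.1 rfl⟩

/-- For `r ≥ 1` and each vertex `v`, the graph `G_r - v` has, up to a
permutation of the colors, exactly one proper 3-coloring. -/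
lemma cast_resolve {n a b : ℕ} (ha : a < n) (hb : b < 2*n)
    (h : (a : ZMod n) = (b : ZMod n)) : a = b ∨ a + n = b := by
  have h2 : a % n = b % n := (ZMod.natCast_eq_natCast_iff a b n).mp h
  rcases lt_or_ge b n with hb' | hb'
  · left; rwa [Nat.mod_eq_of_lt ha, Nat.mod_eq_of_lt hb'] at h2
  · right
    have h3 : b % n = b - n := by
      rw [Nat.mod_eq_sub_mod hb', Nat.mod_eq_of_lt (by omega)]
    rw [Nat.mod_eq_of_lt ha, h3] at h2
    omega

lemma pok_mem (r : ℕ) (v : ZMod (3*r+1)) {k : ℕ} (h1 : 1 ≤ k) (h2 : k ≤ 3*r) :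
    (v + (k : ZMod (3*r+1))) ∈ ({v}ᶜ : Set (ZMod (3*r+1))) := by
  simp only [Set.mem_compl_iff, Set.mem_singleton_iff]
  intro h
  have hk : ((k : ℕ) : ZMod (3*r+1)) = 0 := by
    have := add_eq_left.mp h
    exact this
  rw [ZMod.natCast_eq_zero_iff] at hk
  have := Nat.le_of_dvd (show 0 < k by omega) hk
  omega

lemma pok_adj1 (r : ℕ) (hr : 1 ≤ r) (x : ZMod (3*r+1)) : (pok r).Adj x (x+1) := by
  constructor
  · intro h
    have h1 : ((1 : ℕ) : ZMod (3*r+1)) = 0 := by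
      have : (1 : ZMod (3*r+1)) = 0 := by linear_combination -h
      simpa using this
    rw [ZMod.natCast_eq_zero_iff] at h1
    have := Nat.le_of_dvd (show (0:ℕ) < 1 by norm_num) h1
    omega
  · exact Or.inl (by ring)

lemma pok_adj2 (r : ℕ) (hr : 1 ≤ r) (x : ZMod (3*r+1)) : (pok r).Adj x (x+2) := by
  constructor
  · intro h
    have h1 : ((2 : ℕ) : ZMod (3*r+1)) = 0 := by
      have : (2 : ZMod (3*r+1)) = 0 := by linear_combination -h
      simpa using this
    rw [ZMod.natCast_eq_zero_iff] at h1
    have := Nat.le_of_dvd (show (0:ℕ) < 2 by norm_num) h1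
    omega
  · refine Or.inr (Or.inr (Or.inl ⟨0, hr, ?_⟩))
    push_cast
    ring

lemma pok_step (r : ℕ) (hr : 1 ≤ r) (v : ZMod (3*r+1))
    (c : ((pok r).induce ({v}ᶜ : Set (ZMod (3*r+1)))).Coloring (Fin 3))
    {k : ℕ} (h1 : 1 ≤ k) (h2 : k + 3 ≤ 3*r) :
    c ⟨v + ((k+3 : ℕ) : ZMod (3*r+1)), pok_mem r v (by omega) (by omega)⟩ =
    c ⟨v + ((k : ℕ) : ZMod (3*r+1)), pok_mem r v h1 (by omega)⟩ := by
  set e0 : ({v}ᶜ : Set (ZMod (3*r+1))) := ⟨v + ((k : ℕ) : ZMod (3*r+1)), pok_mem r v h1 (by omega)⟩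
  set e1 : ({v}ᶜ : Set (ZMod (3*r+1))) := ⟨v + ((k+1 : ℕ) : ZMod (3*r+1)), pok_mem r v (by omega) (by omega)⟩
  set e2 : ({v}ᶜ : Set (ZMod (3*r+1))) := ⟨v + ((k+2 : ℕ) : ZMod (3*r+1)), pok_mem r v (by omega) (by omega)⟩
  set e3 : ({v}ᶜ : Set (ZMod (3*r+1))) := ⟨v + ((k+3 : ℕ) : ZMod (3*r+1)), pok_mem r v (by omega) (by omega)⟩
  have c1 : ∀ (m : ℕ), v + ((m+1 : ℕ) : ZMod (3*r+1)) = (v + ((m : ℕ) : ZMod (3*r+1))) + 1 := by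
    intro m; push_cast; ring
  have c2 : ∀ (m : ℕ), v + ((m+2 : ℕ) : ZMod (3*r+1)) = (v + ((m : ℕ) : ZMod (3*r+1))) + 2 := by
    intro m; push_cast; ring
  have a01 : ((pok r).induce ({v}ᶜ : Set (ZMod (3*r+1)))).Adj e0 e1 := by
    show (pok r).Adj _ _
    simp only [e0, e1, c1 k]
    exact pok_adj1 r hr _
  have a12 : ((pok r).induce ({v}ᶜ : Set (ZMod (3*r+1)))).Adj e1 e2 := by
    show (pok r).Adj _ _
    simp only [e1, e2, show k+2 = (k+1)+1 by ring, c1 (k+1)]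
    exact pok_adj1 r hr _
  have a23 : ((pok r).induce ({v}ᶜ : Set (ZMod (3*r+1)))).Adj e2 e3 := by
    show (pok r).Adj _ _
    simp only [e2, e3, show k+3 = (k+2)+1 by ring, c1 (k+2)]
    exact pok_adj1 r hr _
  have a02 : ((pok r).induce ({v}ᶜ : Set (ZMod (3*r+1)))).Adj e0 e2 := by
    show (pok r).Adj _ _
    simp only [e0, e2, c2 k]
    exact pok_adj2 r hr _
  have a13 : ((pok r).induce ({v}ᶜ : Set (ZMod (3*r+1)))).Adj e1 e3 := by
    show (pok r).Adj _ _
    simp only [e1, e3, show k+3 = (k+1)+2 by ring, c2 (k+1)]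
    exact pok_adj2 r hr _
  have d01 := c.valid a01
  have d12 := c.valid a12
  have d23 := c.valid a23
  have d02 := c.valid a02
  have d13 := c.valid a13
  show c e3 = c e0
  have v0 := (c e0).isLt
  have v1 := (c e1).isLt
  have v2 := (c e2).isLt
  have v3 := (c e3).isLt
  have n01 : (c e0).val ≠ (c e1).val := fun h => d01 (Fin.ext h)
  have n12 : (c e1).val ≠ (c e2).val := fun h => d12 (Fin.ext h)
  have n23 : (c e2).val ≠ (c e3).val := fun h => d23 (Fin.ext h)
  have n02 : (c e0).val ≠ (c e2).val := fun h => d02 (Fin.ext h)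
  have n13 : (c e1).val ≠ (c e3).val := fun h => d13 (Fin.ext h)
  exact Fin.ext (by omega)

lemma pok_period (r : ℕ) (hr : 1 ≤ r) (v : ZMod (3*r+1))
    (c : ((pok r).induce ({v}ᶜ : Set (ZMod (3*r+1)))).Coloring (Fin 3)) :
    ∀ k (h1 : 1 ≤ k) (h2 : k ≤ 3*r),
      c ⟨v + ((k : ℕ) : ZMod (3*r+1)), pok_mem r v h1 h2⟩ =
      c ⟨v + (((k-1) % 3 + 1 : ℕ) : ZMod (3*r+1)), pok_mem r v (by omega) (by omega)⟩ := by
  intro k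
  induction k using Nat.strong_induction_on with
  | _ k ih =>
    intro h1 h2
    by_cases hk : k ≤ 3
    · have hkk : (k-1) % 3 + 1 = k := by omega
      simp_rw [hkk]
    · obtain ⟨m, rfl⟩ : ∃ m, k = m + 3 := ⟨k - 3, by omega⟩
      have hm1 : 1 ≤ m := by omega
      have step := pok_step r hr v c hm1 (by omega)
      have ihm := ih m (by omega) hm1 (by omega)
      have hmod : (m + 3 - 1) % 3 = (m - 1) % 3 := by omega
      simp_rw [hmod]
      exact step.trans ihm

lemma pok_adj_near (r : ℕ) (hr : 1 ≤ r) (v : ZMod (3*r+1)) {p q : ℕ}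
    (h1 : 1 ≤ p) (h2 : q ≤ 3*r) (h3 : q = p + 1 ∨ q = p + 2) :
    ((pok r).induce ({v}ᶜ : Set (ZMod (3*r+1)))).Adj
      ⟨v + ((p : ℕ) : ZMod (3*r+1)), pok_mem r v h1 (by omega)⟩
      ⟨v + ((q : ℕ) : ZMod (3*r+1)), pok_mem r v (by omega) h2⟩ := by
  rcases h3 with rfl | rfl
  · show (pok r).Adj (v + ((p : ℕ) : ZMod (3*r+1))) (v + ((p+1 : ℕ) : ZMod (3*r+1)))
    rw [show (v + ((p+1 : ℕ) : ZMod (3*r+1))) = (v + ((p : ℕ) : ZMod (3*r+1))) + 1 by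
      push_cast; ring]
    exact pok_adj1 r hr _
  · show (pok r).Adj (v + ((p : ℕ) : ZMod (3*r+1))) (v + ((p+2 : ℕ) : ZMod (3*r+1)))
    rw [show (v + ((p+2 : ℕ) : ZMod (3*r+1))) = (v + ((p : ℕ) : ZMod (3*r+1))) + 2 by
      push_cast; ring]
    exact pok_adj2 r hr _

theorem pok_delete_vertex_unique_coloring (r : ℕ) (hr : 1 ≤ r)
    (v : ZMod (3 * r + 1)) :
    Nonempty (((pok r).induce ({v}ᶜ : Set (ZMod (3 * r + 1)))).Coloring (Fin 3)) ∧
    ∀ c₁ c₂ : ((pok r).induce ({v}ᶜ : Set (ZMod (3 * r + 1)))).Coloring (Fin 3),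
      ∃ π : Equiv.Perm (Fin 3), ∀ x, c₂ x = π (c₁ x) := by
  constructor
  · refine ⟨SimpleGraph.Coloring.mk
      (fun x => ⟨((x.1 - v).val) % 3, Nat.mod_lt _ (by norm_num)⟩) ?_⟩
    rintro ⟨x, hx⟩ ⟨y, hy⟩ hadj h
    have hadj' : (pok r).Adj x y := hadj
    obtain ⟨hne, hc⟩ := hadj'
    have hab : (x - v).val % 3 = (y - v).val % 3 := congrArg Fin.val h
    set a := (x - v).val with ha
    set b := (y - v).val with hb
    have hxv : x ≠ v := by simpa using hx
    have hyv : y ≠ v := by simpa using hy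
    have ha0 : a ≠ 0 := fun h0 => (sub_ne_zero.mpr hxv) ((ZMod.val_eq_zero _).mp h0)
    have hb0 : b ≠ 0 := fun h0 => (sub_ne_zero.mpr hyv) ((ZMod.val_eq_zero _).mp h0)
    have haL : a < 3*r+1 := ZMod.val_lt _
    have hbL : b < 3*r+1 := ZMod.val_lt _
    have hacast : ((a : ℕ) : ZMod (3*r+1)) = x - v := ZMod.natCast_rightInverse (x - v)
    have hbcast : ((b : ℕ) : ZMod (3*r+1)) = y - v := ZMod.natCast_rightInverse (y - v)
    rcases hc with hd | hd | ⟨j, hj, hd⟩ | ⟨j, hj, hd⟩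
    · have key : ((b : ℕ) : ZMod (3*r+1)) = ((a + 1 : ℕ) : ZMod (3*r+1)) := by
        rw [Nat.cast_add, Nat.cast_one, hbcast, hacast]
        linear_combination hd
      rcases cast_resolve hbL (by omega) key with h' | h' <;> omega
    · have key : ((a : ℕ) : ZMod (3*r+1)) = ((b + 1 : ℕ) : ZMod (3*r+1)) := by
        rw [Nat.cast_add, Nat.cast_one, hbcast, hacast]
        linear_combination hd
      rcases cast_resolve haL (by omega) key with h' | h' <;> omega
    · have key : ((b : ℕ) : ZMod (3*r+1)) = ((a + (3*j+2) : ℕ) : ZMod (3*r+1)) := by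
        rw [Nat.cast_add, hbcast, hacast]
        linear_combination hd
      rcases cast_resolve hbL (by omega) key with h' | h' <;> omega
    · have key : ((a : ℕ) : ZMod (3*r+1)) = ((b + (3*j+2) : ℕ) : ZMod (3*r+1)) := by
        rw [Nat.cast_add, hbcast, hacast]
        linear_combination hd
      rcases cast_resolve haL (by omega) key with h' | h' <;> omega
  · intro c₁ c₂
    set F : (((pok r).induce ({v}ᶜ : Set (ZMod (3*r+1)))).Coloring (Fin 3)) → Fin 3 → Fin 3 :=
      fun c i => c ⟨v + ((i.val + 1 : ℕ) : ZMod (3*r+1)),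
        pok_mem r v (by omega) (by have := i.isLt; omega)⟩ with hF
    have hinj : ∀ c, Function.Injective (F c) := by
      intro c i j hij
      by_contra hne
      have hij' : i.val ≠ j.val := fun hh => hne (Fin.ext hh)
      rcases Nat.lt_or_ge i.val j.val with hlt | hge
      · have hadj := pok_adj_near r hr v (p := i.val + 1) (q := j.val + 1)
          (by omega) (by have := j.isLt; omega) (by omega)
        exact c.valid hadj hij
      · have hlt : j.val < i.val := by omega
        have hadj := pok_adj_near r hr v (p := j.val + 1) (q := i.val + 1)
          (by omega) (by have := i.isLt; omega) (by omega)
        exact c.valid hadj hij.symm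
    have hbij : ∀ c, Function.Bijective (F c) :=
      fun c => Finite.injective_iff_bijective.mp (hinj c)
    set E : (((pok r).induce ({v}ᶜ : Set (ZMod (3*r+1)))).Coloring (Fin 3)) → Equiv.Perm (Fin 3) :=
      fun c => Equiv.ofBijective (F c) (hbij c) with hE
    refine ⟨(E c₁).symm.trans (E c₂), ?_⟩
    intro x
    have hxv : x.1 ≠ v := x.2
    set k := (x.1 - v).val with hk
    have hk0 : k ≠ 0 := fun h0 => (sub_ne_zero.mpr hxv) ((ZMod.val_eq_zero _).mp h0)
    have hkL : k < 3*r+1 := ZMod.val_lt _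
    have hxk : x.1 = v + ((k : ℕ) : ZMod (3*r+1)) := by
      rw [show ((k : ℕ) : ZMod (3*r+1)) = x.1 - v from ZMod.natCast_rightInverse (x.1 - v)]
      ring
    set m := (k - 1) % 3 with hm
    have hm3 : m < 3 := by omega
    have eq1 : ∀ c : (((pok r).induce ({v}ᶜ : Set (ZMod (3*r+1)))).Coloring (Fin 3)),
        c x = F c ⟨m, hm3⟩ := by
      intro c
      have e1 : c x = c ⟨v + ((k : ℕ) : ZMod (3*r+1)), pok_mem r v (by omega) (by omega)⟩ :=
        congrArg c (Subtype.ext hxk)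
      have e2 := pok_period r hr v c k (by omega) (by omega)
      exact e1.trans e2
    rw [eq1 c₁, eq1 c₂]
    show F c₂ ⟨m, hm3⟩ = (E c₂) ((E c₁).symm ((E c₁) ⟨m, hm3⟩))
    rw [Equiv.symm_apply_apply]
    rfl
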